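/- A positive semi-definite quadratic form Q on R^g belongs to the rational closure Ω_g^{rt} (i.e. its null space admits a basis of rational vectors) if and only if there exists h ∈ GL_g(Z) such that hQh^t is block diagonal of the form [[Q', 0],[0, 0]] with Q' a positive definite quadratic form on R^{g'} for some 0 ≤ g' ≤ g. -/

import Mathlib

open Matrix

noncomputable def castL (g : ℕ) : (Fin g → ℤ) →ₗ[ℤ] (Fin g → ℝ) where
  toFun v i := ((v i : ℤ) : ℝ)
  map_add' u v := by ext i; simp
  map_smul' c v := by ext i; push_cast; simp

lemma entry_eq {g : ℕ} (A Q : Matrix (Fin g) (Fin g) ℝ) (i j : Fin g) :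
    (A * Q * Aᵀ) i j = A i ⬝ᵥ Q *ᵥ A j := by
  rw [Matrix.mul_mul_apply, transpose_transpose]

lemma sum_restrict {g g' : ℕ} (hg' : g' ≤ g) (F : Fin g → ℝ)
    (hF : ∀ i : Fin g, ¬ ((i : ℕ) < g') → F i = 0) :
    ∑ i : Fin g, F i = ∑ i : Fin g', F (Fin.castLE hg' i) := by
  calc ∑ i : Fin g, F i
      = ∑ i ∈ Finset.univ.map (Fin.castLEEmb hg'), F i := by
        apply (Finset.sum_subset (Finset.subset_univ _) _).symm
        intro i _ hi
        apply hF
        intro hlt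
        exact hi (Finset.mem_map.2 ⟨⟨i, hlt⟩, Finset.mem_univ _, rfl⟩)
    _ = ∑ i : Fin g', F (Fin.castLE hg' i) := by
        rw [Finset.sum_map]; rfl

/-- A positive semi-definite quadratic form `Q` on `ℝ^g` has a null space
admitting a basis of rational vectors (i.e. its null space is spanned by its rational
points) if and only if there exists `h ∈ GL_g(ℤ)` such that `h Q hᵀ` is block diagonal
`[[Q', 0], [0, 0]]` with `Q'` positive definite of size `g' ≤ g`. -/
theorem stmt2 {g : ℕ} (Q : Matrix (Fin g) (Fin g) ℝ) (hsym : Qᵀ = Q)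
    (hQ : Q.PosSemidef) :
    (LinearMap.ker Q.mulVecLin =
        Submodule.span ℝ {x : Fin g → ℝ | Q.mulVec x = 0 ∧ ∀ i, ∃ q : ℚ, x i = (q : ℝ)})
      ↔
    ∃ (h : Matrix (Fin g) (Fin g) ℤ), IsUnit h.det ∧
      ∃ (g' : ℕ) (hg' : g' ≤ g),
        (∀ i j : Fin g, ((g' : ℕ) ≤ (i : ℕ) ∨ (g' : ℕ) ≤ (j : ℕ)) →
          ((h.map (Int.cast : ℤ → ℝ)) * Q * (h.map (Int.cast : ℤ → ℝ))ᵀ) i j = 0) ∧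
        (Matrix.PosDef (fun i j : Fin g' =>
          ((h.map (Int.cast : ℤ → ℝ)) * Q * (h.map (Int.cast : ℤ → ℝ))ᵀ)
            (Fin.castLE hg' i) (Fin.castLE hg' j))) := by
  constructor
  · intro hker
    classical
    set N : Submodule ℤ (Fin g → ℤ) :=
      LinearMap.ker ((Q.mulVecLin.restrictScalars ℤ).comp (castL g)) with hN
    have hmemN : ∀ v : Fin g → ℤ, v ∈ N ↔ Q *ᵥ (castL g v) = 0 := by
      intro v
      rw [hN, LinearMap.mem_ker, LinearMap.comp_apply, LinearMap.restrictScalars_apply,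
        mulVecLin_apply]
    obtain ⟨n, bM, bN, f, a, hsnf⟩ := N.smithNormalForm (Pi.basisFun ℤ (Fin g))
    have hng : n ≤ g := by
      simpa using Fintype.card_le_of_embedding f
    set g' : ℕ := g - n with hg'def
    have hg' : g' ≤ g := Nat.sub_le g n
    have hgn : g' + n = g := Nat.sub_add_cancel hng
    have haz : ∀ k, a k ≠ 0 := by
      intro k hk
      have h1 := hsnf k
      rw [hk, zero_smul] at h1
      exact bN.ne_zero k (by exact_mod_cast Subtype.coe_injective (by simpa using h1))
    -- castL of bM (f k) lies in the kernel of Q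
    have hbMker : ∀ k : Fin n, castL g (bM (f k)) ∈ LinearMap.ker Q.mulVecLin := by
      intro k
      have h1 : Q *ᵥ (castL g ((bN k : Fin g → ℤ))) = 0 := (hmemN _).1 (bN k).2
      rw [hsnf k, LinearMap.map_smul] at h1
      rw [LinearMap.mem_ker, mulVecLin_apply]
      have h2 : Q *ᵥ (a k • castL g (bM (f k))) = a k • (Q *ᵥ castL g (bM (f k))) := by
        rw [← Int.cast_smul_eq_zsmul (R := ℝ), ← Int.cast_smul_eq_zsmul (R := ℝ), mulVec_smul]
      rw [h2] at h1
      rcases smul_eq_zero.mp h1 with h | h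
      · exact absurd h (haz k)
      · exact h
    -- the kernel equals the real span of the images of bM ∘ f
    have hker2 : LinearMap.ker Q.mulVecLin
        = Submodule.span ℝ (Set.range (fun k : Fin n => castL g (bM (f k)))) := by
      apply le_antisymm
      · rw [hker, Submodule.span_le]
        rintro x ⟨hx1, hx2⟩
        choose q hq using hx2
        set d : ℤ := ∏ i : Fin g, ((q i).den : ℤ) with hd
        have hdvd : ∀ i, ((q i).den : ℤ) ∣ d := fun i =>
          Finset.dvd_prod_of_mem _ (Finset.mem_univ i)
        have hdpos : 0 < d := Finset.prod_pos (fun i _ => by exact_mod_cast (q i).pos)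
        have hdR : (d : ℝ) ≠ 0 := by exact_mod_cast hdpos.ne'
        set v : Fin g → ℤ := fun i => (q i).num * (d / ((q i).den : ℤ)) with hv
        have hvx : ∀ i, ((v i : ℤ) : ℝ) = (d : ℝ) * x i := by
          intro i
          have hden : (((q i).den : ℤ) : ℝ) ≠ 0 := by
            exact_mod_cast (Nat.cast_pos.mpr (q i).pos).ne'
          have h1 : ((q i).den : ℤ) * (d / ((q i).den : ℤ)) = d :=
            Int.mul_ediv_cancel' (hdvd i)
          have h2 := congrArg (fun z : ℤ => ((z : ℤ) : ℝ)) h1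
          push_cast at h2
          have h3 : ((d / ((q i).den : ℤ) : ℤ) : ℝ) = (d : ℝ) / (((q i).den : ℤ) : ℝ) := by
            field_simp
            push_cast
            linarith [h2]
          rw [hv]
          push_cast
          rw [h3, hq i, Rat.cast_def]
          push_cast
          field_simp
        have hcv : castL g v = (d : ℝ) • x := by
          ext i
          exact hvx i
        have hvN : v ∈ N := by
          rw [hmemN, hcv, mulVec_smul, hx1, smul_zero]
        have hxd : x = (d : ℝ)⁻¹ • castL g v := by
          rw [hcv, smul_smul, inv_mul_cancel₀ hdR, one_smul]
        -- castL g v is in the span of the bN-images, hence of the bM∘f images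
        have hv_span : castL g v ∈
            Submodule.span ℝ (Set.range (fun k : Fin n => castL g (bM (f k)))) := by
          have hrepr := bN.sum_repr ⟨v, hvN⟩
          have h4 : v = ∑ k : Fin n, bN.repr ⟨v, hvN⟩ k • ((bN k : Fin g → ℤ)) := by
            have := congrArg (Subtype.val) hrepr
            simpa only [Submodule.coe_sum, Submodule.coe_smul] using this.symm
          rw [h4, map_sum]
          apply Submodule.sum_mem
          intro k _
          rw [LinearMap.map_smul, hsnf k, LinearMap.map_smul]
          exact Submodule.smul_of_tower_mem _ _ (Submodule.smul_of_tower_mem _ _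
            (Submodule.subset_span ⟨k, rfl⟩))
        rw [hxd]
        exact Submodule.smul_mem _ _ hv_span
      · rw [Submodule.span_le]
        rintro y ⟨k, rfl⟩
        exact hbMker k
    -- construct the permutation σ
    set s : Set (Fin g) := Set.range f with hs
    have hcard_s : Fintype.card s = n :=
      (Fintype.card_congr (Equiv.ofInjective f f.injective)).symm.trans (Fintype.card_fin n)
    have hcard_sc : Fintype.card ↥sᶜ = g' := by
      rw [Fintype.card_compl_set, hcard_s, Fintype.card_fin, hg'def]
    let e3a : Fin g' ≃ ↥sᶜ := Fintype.equivOfCardEq (by rw [hcard_sc, Fintype.card_fin])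
    let e3b : Fin n ≃ ↥s := Equiv.ofInjective f f.injective
    set σ : Fin g ≃ Fin g :=
      ((finCongr hgn.symm).trans (finSumFinEquiv.symm)).trans
        (((e3a.sumCongr e3b).trans (Equiv.sumComm ↥sᶜ ↥s)).trans
          ((Equiv.Set.sumCompl s))) with hσdef
    have hσ : ∀ i : Fin g, σ i ∈ s ↔ (g' : ℕ) ≤ (i : ℕ) := by
      intro i
      by_cases hi : (g' : ℕ) ≤ (i : ℕ)
      · have h1 : (finCongr hgn.symm) i = Fin.natAdd g' ⟨(i : ℕ) - g', by omega⟩ := by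
          ext; simp [Fin.natAdd]; omega
        have h2 : σ i = ↑(e3b ⟨(i : ℕ) - g', by omega⟩) := by
          rw [hσdef]
          simp only [Equiv.trans_apply, h1, finSumFinEquiv_symm_apply_natAdd,
            Equiv.sumCongr_apply, Sum.map_inr, Equiv.sumComm_apply, Sum.swap_inr,
            Equiv.Set.sumCompl_apply_inl]
        rw [h2]
        exact ⟨fun _ => hi, fun _ => (e3b _).2⟩
      · have h1 : (finCongr hgn.symm) i = Fin.castAdd n ⟨(i : ℕ), by omega⟩ := by
          ext; simp [Fin.castAdd]
        have h2 : σ i = ↑(e3a ⟨(i : ℕ), by omega⟩) := by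
          rw [hσdef]
          simp only [Equiv.trans_apply, h1, finSumFinEquiv_symm_apply_castAdd,
            Equiv.sumCongr_apply, Sum.map_inl, Equiv.sumComm_apply, Sum.swap_inl,
            Equiv.Set.sumCompl_apply_inr]
        rw [h2]
        constructor
        · intro hmem
          exact absurd hmem (e3a _).2
        · intro h; exact absurd h hi
    -- the integral change of basis matrix
    set hmat : Matrix (Fin g) (Fin g) ℤ := Matrix.of (fun i j => bM (σ i) j) with hhmat
    have hdetT : IsUnit hmatᵀ.det := by
      have hcomp : hmatᵀ = (Pi.basisFun ℤ (Fin g)).toMatrix ⇑(bM.reindex σ.symm) := by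
        ext i j
        simp [hhmat, Module.Basis.toMatrix_apply, Pi.basisFun_repr, Module.Basis.reindex_apply]
      have h1 := Module.Basis.toMatrix_mul_toMatrix_flip (Pi.basisFun ℤ (Fin g)) (bM.reindex σ.symm)
      have h2 := congrArg Matrix.det h1
      rw [Matrix.det_mul, Matrix.det_one] at h2
      rw [hcomp]
      exact IsUnit.of_mul_eq_one _ h2
    have hdet : IsUnit hmat.det := by rw [← Matrix.det_transpose]; exact hdetT
    set A : Matrix (Fin g) (Fin g) ℝ := hmat.map (Int.cast : ℤ → ℝ) with hA
    have hAdet : IsUnit A.det := by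
      have h2 : IsUnit (((Int.castRingHom ℝ).mapMatrix hmat).det) := by
        rw [← RingHom.map_det]; exact hdet.map _
      exact h2
    have hrowA : ∀ i : Fin g, A i = castL g (bM (σ i)) := fun i => rfl
    have hindep : LinearIndependent ℝ (fun i : Fin g => A i) :=
      linearIndependent_rows_iff_isUnit.mpr ((Matrix.isUnit_iff_isUnit_det A).mpr hAdet)
    have hrowker : ∀ i : Fin g, (g' : ℕ) ≤ (i : ℕ) → A i ∈ LinearMap.ker Q.mulVecLin := by
      intro i hi
      obtain ⟨k, hk⟩ := (hσ i).mpr hi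
      rw [hrowA i, ← hk]
      exact hbMker k
    have hkerspan : LinearMap.ker Q.mulVecLin
        = Submodule.span ℝ ((fun i => A i) '' {i : Fin g | (g' : ℕ) ≤ (i : ℕ)}) := by
      apply le_antisymm
      · rw [hker2, Submodule.span_le]
        rintro y ⟨k, rfl⟩
        apply Submodule.subset_span
        refine ⟨σ.symm (f k), (hσ _).mp (by rw [Equiv.apply_symm_apply]; exact ⟨k, rfl⟩), ?_⟩
        show A (σ.symm (f k)) = _
        rw [hrowA, Equiv.apply_symm_apply]
      · rw [Submodule.span_le]
        rintro y ⟨i, hi, rfl⟩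
        exact hrowker i hi
    have hsymM : ∀ i j : Fin g, (A * Q * Aᵀ) i j = (A * Q * Aᵀ) j i := by
      intro i j
      rw [entry_eq, entry_eq]
      calc A i ⬝ᵥ Q *ᵥ A j = (A i ᵥ* Q) ⬝ᵥ A j := dotProduct_mulVec _ _ _
        _ = (Q *ᵥ A i) ⬝ᵥ A j := by rw [← mulVec_transpose, hsym]
        _ = A j ⬝ᵥ Q *ᵥ A i := dotProduct_comm _ _
    refine ⟨hmat, hdet, g', hg', ?_, ?_⟩
    · intro i j hij
      rw [← hA]
      rcases hij with hi | hj
      · rw [hsymM, entry_eq]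
        have h0 : Q *ᵥ A i = 0 := by
          simpa [mulVecLin_apply] using LinearMap.mem_ker.mp (hrowker i hi)
        rw [h0, dotProduct_zero]
      · rw [entry_eq]
        have h0 : Q *ᵥ A j = 0 := by
          simpa [mulVecLin_apply] using LinearMap.mem_ker.mp (hrowker j hj)
        rw [h0, dotProduct_zero]
    · rw [← hA]
      refine Matrix.PosDef.of_dotProduct_mulVec_pos ?_ ?_
      · show (Matrix.of fun i j : Fin g' => (A * Q * Aᵀ) (Fin.castLE hg' i) (Fin.castLE hg' j))ᴴ = _
        ext i j
        simp only [conjTranspose_apply, Matrix.of_apply, star_trivial]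
        exact hsymM _ _
      · intro x hx
        set y : Fin g → ℝ := fun j => if hj : (j : ℕ) < g' then x ⟨(j : ℕ), hj⟩ else 0 with hy
        have hyx : ∀ i' : Fin g', y (Fin.castLE hg' i') = x i' := by
          intro i'
          rw [hy]
          exact dif_pos i'.2
        have hQeq : star x ⬝ᵥ ((fun i j : Fin g' =>
            (A * Q * Aᵀ) (Fin.castLE hg' i) (Fin.castLE hg' j)) *ᵥ x)
            = y ⬝ᵥ ((A * Q * Aᵀ) *ᵥ y) := by
          rw [star_trivial]
          simp only [dotProduct, mulVec]
          rw [sum_restrict hg' (fun i => y i * ∑ j, (A * Q * Aᵀ) i j * y j)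
            (fun i hilt => by rw [hy]; simp only; rw [dif_neg hilt, zero_mul])]
          apply Finset.sum_congr rfl
          intro i' _
          rw [hyx]
          congr 1
          rw [sum_restrict hg' (fun j => (A * Q * Aᵀ) (Fin.castLE hg' i') j * y j)
            (fun j hjlt => by rw [hy]; simp only; rw [dif_neg hjlt, mul_zero])]
          apply Finset.sum_congr rfl
          intro j' _
          rw [hyx]
        have hMpsd : (A * Q * Aᵀ).PosSemidef := by
          have h1 := hQ.mul_mul_conjTranspose_same A
          rwa [conjTranspose_eq_transpose_of_trivial] at h1
        by_contra hle
        push_neg at hle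
        have h0 : y ⬝ᵥ ((A * Q * Aᵀ) *ᵥ y) = 0 := by
          refine le_antisymm (by rw [← hQeq]; exact hle) ?_
          simpa [star_trivial] using hMpsd.dotProduct_mulVec_nonneg y
        have hMy : (A * Q * Aᵀ) *ᵥ y = 0 :=
          (hMpsd.dotProduct_mulVec_zero_iff y).mp (by rwa [star_trivial])
        have hQAy : Q *ᵥ (Aᵀ *ᵥ y) = 0 := by
          have h1 : A *ᵥ (Q *ᵥ (Aᵀ *ᵥ y)) = 0 := by
            rw [mulVec_mulVec, mulVec_mulVec]
            simpa [Matrix.mul_assoc] using hMy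
          have h2 := congrArg (fun w => A⁻¹ *ᵥ w) h1
          simp only [mulVec_mulVec, mulVec_zero] at h2
          rw [← Matrix.mul_assoc, Matrix.nonsing_inv_mul A hAdet, Matrix.one_mul] at h2
          rw [mulVec_mulVec]
          exact h2
        have hy1 : Aᵀ *ᵥ y ∈
            Submodule.span ℝ ((fun i => A i) '' {i : Fin g | (g' : ℕ) ≤ (i : ℕ)}) := by
          rw [← hkerspan]
          exact LinearMap.mem_ker.mpr (by rw [mulVecLin_apply]; exact hQAy)
        have hexp : Aᵀ *ᵥ y = ∑ j : Fin g, y j • A j := by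
          ext k
          simp [mulVec, dotProduct, transpose_apply, Finset.sum_apply, mul_comm]
        have hy2 : Aᵀ *ᵥ y ∈
            Submodule.span ℝ ((fun i => A i) '' {i : Fin g | ¬ (g' : ℕ) ≤ (i : ℕ)}) := by
          rw [hexp]
          apply Submodule.sum_mem
          intro j _
          by_cases hj : (g' : ℕ) ≤ (j : ℕ)
          · have hyj : y j = 0 := by rw [hy]; exact dif_neg (not_lt.mpr hj)
            rw [hyj, zero_smul]
            exact Submodule.zero_mem _
          · exact Submodule.smul_mem _ _ (Submodule.subset_span ⟨j, hj, rfl⟩)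
        have hdisj := hindep.disjoint_span_image
          (s := {i : Fin g | (g' : ℕ) ≤ (i : ℕ)}) (t := {i : Fin g | ¬ (g' : ℕ) ≤ (i : ℕ)})
          (Set.disjoint_left.mpr (fun i hi hj => hj hi))
        have h00 : Aᵀ *ᵥ y = 0 := Submodule.disjoint_def.mp hdisj _ hy1 hy2
        have hy0 : y = 0 := by
          have h1 := congrArg (fun w => (Aᵀ)⁻¹ *ᵥ w) h00
          have hATdet : IsUnit Aᵀ.det := by rwa [det_transpose]
          simpa [mulVec_mulVec, Matrix.nonsing_inv_mul Aᵀ hATdet] using h1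
        apply hx
        ext i'
        rw [← hyx i', hy0]
        rfl
  · intro hex
    obtain ⟨h, hdet, g', hg', hzero, hpd⟩ := hex
    set A : Matrix (Fin g) (Fin g) ℝ := h.map (Int.cast : ℤ → ℝ) with hA
    have hAdet : IsUnit A.det := by
      have h2 : IsUnit (((Int.castRingHom ℝ).mapMatrix h).det) := by
        rw [← RingHom.map_det]; exact hdet.map _
      exact h2
    have hAinj : ∀ w : Fin g → ℝ, A *ᵥ w = 0 → w = 0 := by
      intro w hw
      have : A⁻¹ *ᵥ (A *ᵥ w) = w := by
        rw [mulVec_mulVec, Matrix.nonsing_inv_mul A hAdet, one_mulVec]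
      rw [hw, mulVec_zero] at this
      exact this.symm
    -- rows beyond g' are in the kernel of Q
    have hrow : ∀ j : Fin g, (g' : ℕ) ≤ (j : ℕ) → Q *ᵥ A j = 0 := by
      intro j hj
      apply hAinj
      ext k
      have := hzero k j (Or.inr hj)
      rw [entry_eq] at this
      simpa [mulVec, dotProduct, Matrix.mulVec, Finset.mul_sum] using this
    apply le_antisymm
    · -- ker ≤ span
      intro x hx
      rw [LinearMap.mem_ker, mulVecLin_apply] at hx
      set y : Fin g → ℝ := (Aᵀ)⁻¹ *ᵥ x with hy
      have hxy : x = Aᵀ *ᵥ y := by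
        rw [hy, mulVec_mulVec, Matrix.mul_nonsing_inv _ (by rwa [det_transpose]), one_mulVec]
      have hMy : (A * Q * Aᵀ) *ᵥ y = 0 := by
        rw [← mulVec_mulVec, ← mulVec_mulVec, ← hxy, hx, mulVec_zero]
      -- top coordinates of y vanish
      have hytop : ∀ k : Fin g, (k : ℕ) < g' → y k = 0 := by
        intro k hk
        set x' : Fin g' → ℝ := fun k => y (Fin.castLE hg' k) with hx'
        have hQ'x' : ∀ i' : Fin g', (∑ j' : Fin g',
            (A * Q * Aᵀ) (Fin.castLE hg' i') (Fin.castLE hg' j') * x' j') = 0 := by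
          intro i'
          have h2 : ∑ j : Fin g, (A * Q * Aᵀ) (Fin.castLE hg' i') j * y j
              = ∑ j' : Fin g', (A * Q * Aᵀ) (Fin.castLE hg' i') (Fin.castLE hg' j') * x' j' :=
            sum_restrict hg' _ (fun j hj => by
              rw [hzero _ j (Or.inr (le_of_not_gt hj)), zero_mul])
          rw [← h2]
          exact congrFun hMy (Fin.castLE hg' i')
        by_contra hne
        have hx'ne : x' ≠ 0 := by
          intro h0
          exact hne (by simpa [hx'] using congrFun h0 ⟨(k : ℕ), hk⟩)
        have := hpd.dotProduct_mulVec_pos hx'ne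
        have hzero' : (fun i j : Fin g' => (A * Q * Aᵀ) (Fin.castLE hg' i) (Fin.castLE hg' j)) *ᵥ x' = 0 := by
          ext i'; exact hQ'x' i'
        rw [hzero'] at this
        simp at this
      rw [hxy]
      have hexp : Aᵀ *ᵥ y = ∑ j : Fin g, y j • A j := by
        ext k
        simp [mulVec, dotProduct, transpose_apply, Finset.sum_apply, mul_comm]
      rw [hexp]
      apply Submodule.sum_mem
      intro j _
      by_cases hj : (g' : ℕ) ≤ (j : ℕ)
      · apply Submodule.smul_mem
        apply Submodule.subset_span
        refine ⟨hrow j hj, fun i => ⟨(h j i : ℚ), ?_⟩⟩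
        simp [hA]
      · rw [hytop j (lt_of_not_ge hj), zero_smul]
        exact Submodule.zero_mem _
    · rw [Submodule.span_le]
      rintro x ⟨hx1, -⟩
      rw [SetLike.mem_coe, LinearMap.mem_ker, mulVecLin_apply]
      exact hx1
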